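/- Let α > 0 and Φ := I_{Nn} + 𝐖. Then the resolvent of Φ^{-1}A has full domain and is single-valued: for every 𝐱 ∈ ℝ^{Nn} there exists exactly one 𝐲 ∈ ℝ^{Nn} such that 0 ∈ Φ(𝐲 − 𝐱) + F_a(𝐲) + N_𝛀(𝐲). -/

import Mathlib

open scoped InnerProductSpace

/-- The strategy-profile space `ℝ^n = ℝ^{n_1} × ⋯ × ℝ^{n_N}`, with the Euclidean (ℓ²)
structure. Block `i` is agent `i`'s strategy space `ℝ^{n_i}`. -/
abbrev Prof (N : ℕ) (d : Fin N → ℕ) : Type :=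
  PiLp 2 (fun i : Fin N => EuclideanSpace ℝ (Fin (d i)))

/-- The stacked space `ℝ^{Nn}` of all agents' estimates; block `i` is agent `i`'s estimate
`𝐱_i ∈ ℝ^n` of the full strategy profile. -/
abbrev Est (N : ℕ) (d : Fin N → ℕ) : Type :=
  PiLp 2 (fun _ : Fin N => Prof N d)

/-- The pseudo-gradient `F(x) := col(∇_{x_i} J_i(x_i, x_{−i}))_i`, built from the partial
gradients `G i`. -/
noncomputable def pseudoGrad {N : ℕ} {d : Fin N → ℕ}
    (G : ∀ i : Fin N, Prof N d → EuclideanSpace ℝ (Fin (d i)))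
    (x : Prof N d) : Prof N d :=
  WithLp.toLp 2 (fun i => G i x)

/-- The extended pseudo-gradient `𝐅(𝐱) := col(∇_{x_i} J_i(𝐱_{i,i}, 𝐱_{i,−i}))_i`. -/
noncomputable def extPseudoGrad {N : ℕ} {d : Fin N → ℕ}
    (G : ∀ i : Fin N, Prof N d → EuclideanSpace ℝ (Fin (d i)))
    (bx : Est N d) : Prof N d :=
  WithLp.toLp 2 (fun i => G i (bx i))

/-- `Rᵀ` places block `i` of `v ∈ ℝ^n` in the `(i,i)`-block position of `ℝ^{Nn}`,
with zeros elsewhere. -/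
noncomputable def RT {N : ℕ} {d : Fin N → ℕ} (v : Prof N d) : Est N d :=
  WithLp.toLp 2 (fun i => WithLp.toLp 2 (Function.update (0 : Prof N d) i (v i)))

/-- `𝐖 = W ⊗ I_n` acting blockwise: `(𝐖𝐱)_i = Σ_j w_{ij} 𝐱_j`. -/
noncomputable def Wact {N : ℕ} {d : Fin N → ℕ} (W : Matrix (Fin N) (Fin N) ℝ) (bx : Est N d) : Est N d :=
  WithLp.toLp 2 (fun i => ∑ j, W i j • bx j)

/-- `F_a(𝐱) := α Rᵀ𝐅(𝐱) + (I_{Nn} − 𝐖)𝐱`. -/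
noncomputable def Fa {N : ℕ} {d : Fin N → ℕ} (α : ℝ)
    (G : ∀ i : Fin N, Prof N d → EuclideanSpace ℝ (Fin (d i)))
    (W : Matrix (Fin N) (Fin N) ℝ) (bx : Est N d) : Est N d :=
  α • RT (extPseudoGrad G bx) + (bx - Wact W bx)

/-- `𝛀 := {𝐱 ∈ ℝ^{Nn} : 𝐱_{i,i} ∈ Ω_i for all i}`. -/
def bigOmega {N : ℕ} {d : Fin N → ℕ}
    (Ω : ∀ i : Fin N, Set (EuclideanSpace ℝ (Fin (d i)))) : Set (Est N d) :=
  {bx | ∀ i, bx i i ∈ Ω i}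

/-- Normal cone operator of a closed convex set `S` at `x`
(empty if `x ∉ S`). -/
def normalCone {E : Type*} [NormedAddCommGroup E] [InnerProductSpace ℝ E]
    (S : Set E) (x : E) : Set E :=
  {v | x ∈ S ∧ ∀ z ∈ S, ⟪v, z - x⟫_ℝ ≤ 0}

/-- The consensus subspace `E_n := {𝟏_N ⊗ y : y ∈ ℝ^n} ⊆ ℝ^{Nn}`. -/
def consensus (N : ℕ) (d : Fin N → ℕ) : Set (Est N d) :=
  {bx | ∃ y : Prof N d, ∀ i, bx i = y}

/-- The preconditioning matrix `Φ := I_{Nn} + 𝐖`, as an operator on `ℝ^{Nn}`. -/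
noncomputable def PhiOp {N : ℕ} {d : Fin N → ℕ} (W : Matrix (Fin N) (Fin N) ℝ)
    (bx : Est N d) : Est N d :=
  bx + Wact W bx


section VIAux

theorem vi_exists_unique {E : Type*} [NormedAddCommGroup E] [InnerProductSpace ℝ E]
    [CompleteSpace E] {K : Set E} (hne : K.Nonempty) (hcl : IsClosed K) (hconv : Convex ℝ K)
    (S : E → E) (m L : ℝ) (hm : 0 < m)
    (hmon : ∀ y z, ⟪S y - S z, y - z⟫_ℝ ≥ m * ‖y - z‖ ^ 2)
    (hlip : ∀ y z, ‖S y - S z‖ ≤ L * ‖y - z‖) (b : E) :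
    ∃! y, y ∈ K ∧ ∀ z ∈ K, ⟪b - S y, z - y⟫_ℝ ≤ 0 := by
  -- projection onto K
  obtain ⟨P, hPmem, hPvar⟩ :
      ∃ P : E → E, (∀ u, P u ∈ K) ∧ ∀ u, ∀ w ∈ K, ⟪u - P u, w - P u⟫_ℝ ≤ 0 := by
    have h : ∀ u : E, ∃ v, v ∈ K ∧ ∀ w ∈ K, ⟪u - v, w - v⟫_ℝ ≤ 0 := fun u => by
      obtain ⟨v, hv, hmin⟩ :=
        exists_norm_eq_iInf_of_complete_convex hne hcl.isComplete hconv u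
      exact ⟨v, hv, (norm_eq_iInf_iff_real_inner_le_zero hconv hv).1 hmin⟩
    choose P h1 h2 using h
    exact ⟨P, h1, h2⟩
  have hPnonexp : ∀ u u', ‖P u - P u'‖ ≤ ‖u - u'‖ := by
    intro u u'
    have h1 := hPvar u (P u') (hPmem u')
    have h2 := hPvar u' (P u) (hPmem u)
    have h1' : 0 ≤ ⟪u - P u, P u - P u'⟫_ℝ := by
      rw [show (P u' - P u : E) = -(P u - P u') by abel, inner_neg_right] at h1
      linarith
    have h2' : 0 ≤ ⟪P u' - u', P u - P u'⟫_ℝ := by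
      rw [show (P u' - u' : E) = -(u' - P u') by abel, inner_neg_left]
      linarith
    have hadd : ⟪u - P u, P u - P u'⟫_ℝ + ⟪P u' - u', P u - P u'⟫_ℝ
        + ⟪P u - P u', P u - P u'⟫_ℝ = ⟪u - u', P u - P u'⟫_ℝ := by
      rw [← inner_add_left, ← inner_add_left]
      congr 1
      abel
    rw [real_inner_self_eq_norm_sq] at hadd
    have key : ‖P u - P u'‖ ^ 2 ≤ ⟪u - u', P u - P u'⟫_ℝ := by linarith
    have hcs := real_inner_le_norm (u - u') (P u - P u')
    rcases eq_or_lt_of_le (norm_nonneg (P u - P u')) with h0 | h0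
    · simpa [← h0] using norm_nonneg (u - u')
    · nlinarith
  -- contraction setup
  set L' : ℝ := max L m with hL'
  have hL'pos : 0 < L' := lt_of_lt_of_le hm (le_max_right _ _)
  have hlip' : ∀ y z, ‖S y - S z‖ ≤ L' * ‖y - z‖ := fun y z =>
    (hlip y z).trans (mul_le_mul_of_nonneg_right (le_max_left _ _) (norm_nonneg _))
  set t : ℝ := m / L' ^ 2 with ht
  have htpos : 0 < t := div_pos hm (by positivity)
  set k : ℝ := Real.sqrt (1 - m ^ 2 / L' ^ 2) with hk
  have hmL' : m ≤ L' := le_max_right _ _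
  have hknonneg : 0 ≤ k := Real.sqrt_nonneg _
  have harg : 0 ≤ 1 - m ^ 2 / L' ^ 2 := by
    have h1 : m ^ 2 ≤ L' ^ 2 := by nlinarith
    have h2 : m ^ 2 / L' ^ 2 ≤ 1 := by
      rw [div_le_one (by positivity)]; exact h1
    linarith
  have hklt : k < 1 := by
    rw [hk]
    have h1 : 1 - m ^ 2 / L' ^ 2 < 1 := by
      have : 0 < m ^ 2 / L' ^ 2 := by positivity
      linarith
    calc Real.sqrt (1 - m ^ 2 / L' ^ 2) < Real.sqrt 1 := Real.sqrt_lt_sqrt harg h1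
      _ = 1 := Real.sqrt_one
  set f : E → E := fun y => P (y - t • (S y - b)) with hf
  have hcontract : ∀ y z, ‖f y - f z‖ ≤ k * ‖y - z‖ := by
    intro y z
    have h1 : ‖f y - f z‖ ≤ ‖(y - t • (S y - b)) - (z - t • (S z - b))‖ := hPnonexp _ _
    have e : (y - t • (S y - b)) - (z - t • (S z - b)) = (y - z) - t • (S y - S z) := by
      rw [smul_sub, smul_sub, smul_sub]; abel
    rw [e] at h1
    have hsq : ‖(y - z) - t • (S y - S z)‖ ^ 2 ≤ k ^ 2 * ‖y - z‖ ^ 2 := by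
      have expand : ‖(y - z) - t • (S y - S z)‖ ^ 2
          = ‖y - z‖ ^ 2 - 2 * t * ⟪S y - S z, y - z⟫_ℝ + t ^ 2 * ‖S y - S z‖ ^ 2 := by
        rw [norm_sub_sq_real, norm_smul, real_inner_smul_right, real_inner_comm]
        simp [abs_of_pos htpos]
        ring
      have hmono := hmon y z
      have hl := hlip' y z
      have hl2 : ‖S y - S z‖ ^ 2 ≤ L' ^ 2 * ‖y - z‖ ^ 2 := by
        nlinarith [norm_nonneg (S y - S z), norm_nonneg (y - z)]
      have hk2 : k ^ 2 = 1 - m ^ 2 / L' ^ 2 := Real.sq_sqrt harg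
      have htL : t ^ 2 * L' ^ 2 = m ^ 2 / L' ^ 2 := by
        rw [ht]
        field_simp
      have h2tm : 2 * t * m = 2 * (m ^ 2 / L' ^ 2) := by
        rw [ht]; field_simp
      calc ‖(y - z) - t • (S y - S z)‖ ^ 2
          = ‖y - z‖ ^ 2 - 2 * t * ⟪S y - S z, y - z⟫_ℝ + t ^ 2 * ‖S y - S z‖ ^ 2 := expand
        _ ≤ ‖y - z‖ ^ 2 - 2 * t * (m * ‖y - z‖ ^ 2) + t ^ 2 * (L' ^ 2 * ‖y - z‖ ^ 2) := by
            nlinarith [htpos.le, hmono, hl2, sq_nonneg t]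
        _ = (1 - 2 * t * m + t ^ 2 * L' ^ 2) * ‖y - z‖ ^ 2 := by ring
        _ = k ^ 2 * ‖y - z‖ ^ 2 := by rw [hk2, htL, h2tm]; ring
    calc ‖f y - f z‖ ≤ ‖(y - z) - t • (S y - S z)‖ := h1
      _ ≤ k * ‖y - z‖ := by
          nlinarith [norm_nonneg ((y - z) - t • (S y - S z)),
            mul_nonneg hknonneg (norm_nonneg (y - z))]
  -- Banach fixed point
  have hCW : ContractingWith (Real.toNNReal k) f := by
    constructor
    · have : Real.toNNReal k < Real.toNNReal 1 := by
        rw [Real.toNNReal_lt_toNNReal_iff one_pos]; exact hklt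
      simpa using this
    · apply LipschitzWith.of_dist_le_mul
      intro y z
      rw [dist_eq_norm, dist_eq_norm]
      calc ‖f y - f z‖ ≤ k * ‖y - z‖ := hcontract y z
        _ = (Real.toNNReal k : ℝ) * ‖y - z‖ := by rw [Real.coe_toNNReal _ hknonneg]
  obtain ⟨y, hyfix, -⟩ := hCW.exists_fixedPoint (0 : E) (edist_ne_top _ _)
  have hyfix' : P (y - t • (S y - b)) = y := hyfix
  -- the fixed point solves the VI
  have hymem : y ∈ K := hyfix' ▸ hPmem _
  have hyVI : ∀ z ∈ K, ⟪b - S y, z - y⟫_ℝ ≤ 0 := by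
    intro z hz
    have hv := hPvar (y - t • (S y - b)) z hz
    rw [hyfix'] at hv
    have e : (y - t • (S y - b)) - y = t • (b - S y) := by
      rw [smul_sub, smul_sub]; abel
    rw [e, real_inner_smul_left] at hv
    nlinarith [hv]
  refine ⟨y, ⟨hymem, hyVI⟩, ?_⟩
  rintro y' ⟨hy'mem, hy'VI⟩
  have h1 := hy'VI y hymem
  have h2 := hyVI y' hy'mem
  have hsum : ⟪S y - S y', y - y'⟫_ℝ ≤ 0 := by
    have h2' : ⟪b - S y, y' - y⟫_ℝ = -⟪b - S y, y - y'⟫_ℝ := by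
      rw [show (y' - y : E) = -(y - y') by abel, inner_neg_right]
    have e1 : ⟪b - S y', y - y'⟫_ℝ - ⟪b - S y, y - y'⟫_ℝ = ⟪S y - S y', y - y'⟫_ℝ := by
      rw [← inner_sub_left]
      congr 1
      abel
    linarith
  have hmono := hmon y y'
  have h3 : m * ‖y - y'‖ ^ 2 ≤ 0 := le_trans hmono hsum
  have h4 : ‖y - y'‖ ^ 2 = 0 := le_antisymm (by nlinarith [sq_nonneg ‖y - y'‖]) (sq_nonneg _)
  have h5 : y - y' = 0 := norm_eq_zero.mp (pow_eq_zero_iff two_ne_zero |>.mp h4)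
  exact (sub_eq_zero.mp h5).symm

end VIAux

section Helpers

variable {N : ℕ} {d : Fin N → ℕ}

lemma norm_eq_of_sq_eq {x y : ℝ} (hx : 0 ≤ x) (hy : 0 ≤ y) (h : x ^ 2 = y ^ 2) : x = y := by
  nlinarith

lemma block_norm_le (v : Prof N d) (i : Fin N) : ‖v i‖ ≤ ‖v‖ := by
  have h := PiLp.norm_sq_eq_of_L2 _ v
  have h1 : ‖v i‖ ^ 2 ≤ ‖v‖ ^ 2 := by
    rw [h]
    exact Finset.single_le_sum (f := fun j => ‖v j‖ ^ 2) (fun j _ => sq_nonneg _)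
      (Finset.mem_univ i)
  nlinarith [norm_nonneg (v i), norm_nonneg v]

lemma sub_single_block_norm (x y : Prof N d) (i : Fin N)
    (h : ∀ j, j ≠ i → x j = y j) : ‖x - y‖ = ‖x i - y i‖ := by
  apply norm_eq_of_sq_eq (norm_nonneg _) (norm_nonneg _)
  refine (PiLp.norm_sq_eq_of_L2 _ (x - y)).trans ?_
  rw [Finset.sum_eq_single_of_mem i (Finset.mem_univ i)]
  · rfl
  · intro j _ hj
    have h0 : (x - y) j = 0 := by
      show x j - y j = 0
      rw [h j hj, sub_self]
    rw [h0]
    simp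

end Helpers


/-- Remark 2 of the paper. Under the standing assumptions, for any
`α > 0` and `Φ := I_{Nn} + 𝐖`, the resolvent `J_{Φ⁻¹A}` of `Φ⁻¹A`, with `A = F_a + N_𝛀`,
has full domain and is single-valued: for every `𝐱` there is exactly one `𝐲` with
`0 ∈ Φ(𝐲 − 𝐱) + F_a(𝐲) + N_𝛀(𝐲)`. -/
theorem stmt12 {N : ℕ} {d : Fin N → ℕ}
    (Ω : ∀ i : Fin N, Set (EuclideanSpace ℝ (Fin (d i))))
    (hΩ : ∀ i, (Ω i).Nonempty ∧ IsClosed (Ω i) ∧ Convex ℝ (Ω i))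
    (J : ∀ _ : Fin N, Prof N d → ℝ)
    (hJcont : ∀ i, Continuous (J i))
    (hJconv : ∀ i (x : Prof N d),
      ConvexOn ℝ Set.univ (fun y => J i (WithLp.toLp 2 (Function.update x i y))))
    (G : ∀ i : Fin N, Prof N d → EuclideanSpace ℝ (Fin (d i)))
    (hGgrad : ∀ i (x : Prof N d),
      HasGradientAt (fun y => J i (WithLp.toLp 2 (Function.update x i y))) (G i x) (x i))
    (μ θ0 : ℝ) (hμ : 0 < μ) (hθ0 : 0 < θ0)
    (hFmon : ∀ x y : Prof N d,
      ⟪x - y, pseudoGrad G x - pseudoGrad G y⟫_ℝ ≥ μ * ‖x - y‖ ^ 2)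
    (hFlip : ∀ x y : Prof N d, ‖pseudoGrad G x - pseudoGrad G y‖ ≤ θ0 * ‖x - y‖)
    (W : Matrix (Fin N) (Fin N) ℝ)
    (hWsymm : W.IsSymm) (hWnonneg : ∀ i j, 0 ≤ W i j)
    (hWstoch : ∀ i, ∑ j, W i j = 1) (hWdiag : ∀ i, 0 < W i i)
    (α : ℝ) (hα : 0 < α) :
    ∀ bx : Est N d, ∃! bx' : Est N d,
      ∃ w ∈ normalCone (bigOmega Ω) bx',
        PhiOp W (bx' - bx) + Fa α G W bx' + w = 0 := by
  
  classical
  intro bx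
  set c : Est N d := PhiOp W bx with hc
  set u : ∀ _ : Fin N, Prof N d := fun i => (WithLp.toLp 2 (fun j => (2 : ℝ)⁻¹ • c i j) : Prof N d) with hu
  set g : ∀ i : Fin N, EuclideanSpace ℝ (Fin (d i)) → EuclideanSpace ℝ (Fin (d i)) :=
    fun i y => G i (WithLp.toLp 2 (Function.update (u i) i y)) with hg
  have hgmon : ∀ (i : Fin N) (y z : EuclideanSpace ℝ (Fin (d i))),
      0 ≤ ⟪g i y - g i z, y - z⟫_ℝ := by
    intro i y z
    set x1 : Prof N d := WithLp.toLp 2 (Function.update (u i) i y) with hx1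
    set x2 : Prof N d := WithLp.toLp 2 (Function.update (u i) i z) with hx2
    have hm := hFmon x1 x2
    have hinner : ⟪x1 - x2, pseudoGrad G x1 - pseudoGrad G x2⟫_ℝ
        = ⟪y - z, g i y - g i z⟫_ℝ := by
      rw [PiLp.inner_apply]
      rw [Finset.sum_eq_single_of_mem i (Finset.mem_univ i)]
      · have e1 : (x1 - x2) i = y - z := by
          show x1 i - x2 i = y - z
          rw [hx1, hx2]
          simp
        have e2 : (pseudoGrad G x1 - pseudoGrad G x2) i = g i y - g i z := rfl
        rw [e1, e2]
      · intro j _ hj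
        have e1 : (x1 - x2) j = 0 := by
          show x1 j - x2 j = 0
          rw [hx1, hx2]
          simp [Function.update_of_ne hj]
        rw [e1, inner_zero_left]
    have hnorm : ‖x1 - x2‖ = ‖y - z‖ := by
      rw [sub_single_block_norm x1 x2 i
        (fun j hj => by rw [hx1, hx2]; simp [Function.update_of_ne hj])]
      have e : x1 i - x2 i = y - z := by
        rw [hx1, hx2]; simp
      rw [e]
    rw [hinner, hnorm] at hm
    have hpos : 0 ≤ μ * ‖y - z‖ ^ 2 := by positivity
    rw [real_inner_comm]
    linarith
  have hglip : ∀ (i : Fin N) (y z : EuclideanSpace ℝ (Fin (d i))),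
      ‖g i y - g i z‖ ≤ θ0 * ‖y - z‖ := by
    intro i y z
    set x1 : Prof N d := WithLp.toLp 2 (Function.update (u i) i y) with hx1
    set x2 : Prof N d := WithLp.toLp 2 (Function.update (u i) i z) with hx2
    have h1 : g i y - g i z = (pseudoGrad G x1 - pseudoGrad G x2) i := rfl
    have h2 : ‖(pseudoGrad G x1 - pseudoGrad G x2) i‖ ≤ ‖pseudoGrad G x1 - pseudoGrad G x2‖ :=
      block_norm_le _ _
    have h3 := hFlip x1 x2
    have hnorm : ‖x1 - x2‖ = ‖y - z‖ := by
      rw [sub_single_block_norm x1 x2 i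
        (fun j hj => by rw [hx1, hx2]; simp [Function.update_of_ne hj])]
      have e : x1 i - x2 i = y - z := by
        rw [hx1, hx2]; simp
      rw [e]
    rw [hnorm] at h3
    rw [h1]
    exact h2.trans h3
  set S : ∀ i : Fin N, EuclideanSpace ℝ (Fin (d i)) → EuclideanSpace ℝ (Fin (d i)) :=
    fun i y => (2 : ℝ) • y + α • g i y with hS
  have hSsub : ∀ (i : Fin N) (y z : EuclideanSpace ℝ (Fin (d i))),
      S i y - S i z = (2 : ℝ) • (y - z) + α • (g i y - g i z) := by
    intro i y z
    show (2 : ℝ) • y + α • g i y - ((2 : ℝ) • z + α • g i z) = _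
    rw [smul_sub, smul_sub]
    abel
  have hSmon : ∀ (i : Fin N) (y z : EuclideanSpace ℝ (Fin (d i))),
      ⟪S i y - S i z, y - z⟫_ℝ ≥ 2 * ‖y - z‖ ^ 2 := by
    intro i y z
    rw [hSsub, inner_add_left, real_inner_smul_left, real_inner_smul_left,
      real_inner_self_eq_norm_sq]
    have h1 := hgmon i y z
    nlinarith
  have hSlip : ∀ (i : Fin N) (y z : EuclideanSpace ℝ (Fin (d i))),
      ‖S i y - S i z‖ ≤ (2 + α * θ0) * ‖y - z‖ := by
    intro i y z
    rw [hSsub]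
    calc ‖(2 : ℝ) • (y - z) + α • (g i y - g i z)‖
        ≤ ‖(2 : ℝ) • (y - z)‖ + ‖α • (g i y - g i z)‖ := norm_add_le _ _
      _ = 2 * ‖y - z‖ + α * ‖g i y - g i z‖ := by
          rw [norm_smul, norm_smul, Real.norm_eq_abs, Real.norm_eq_abs,
            abs_of_pos (by norm_num : (0:ℝ) < 2), abs_of_pos hα]
      _ ≤ 2 * ‖y - z‖ + α * (θ0 * ‖y - z‖) := by
          have := hglip i y z
          nlinarith
      _ = (2 + α * θ0) * ‖y - z‖ := by ring
  have hVI : ∀ i : Fin N, ∃! y : EuclideanSpace ℝ (Fin (d i)),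
      y ∈ Ω i ∧ ∀ z ∈ Ω i, ⟪c i i - S i y, z - y⟫_ℝ ≤ 0 :=
    fun i => vi_exists_unique (hΩ i).1 (hΩ i).2.1 (hΩ i).2.2 (S i) 2 (2 + α * θ0)
      two_pos (hSmon i) (hSlip i) (c i i)
  choose Y hY hYuniq using hVI
  set bx' : Est N d := (WithLp.toLp 2 (fun i => WithLp.toLp 2 (Function.update (u i) i (Y i))) : Est N d) with hbx'
  have hWact_sub : ∀ v w : Est N d, Wact W (v - w) = Wact W v - Wact W w := by
    intro v w
    apply PiLp.ext
    intro i
    show ∑ j, W i j • (v - w) j = (∑ j, W i j • v j) - ∑ j, W i j • w j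
    rw [← Finset.sum_sub_distrib]
    refine Finset.sum_congr rfl fun j _ => ?_
    show W i j • (v j - w j) = _
    rw [smul_sub]
  have keyalg : ∀ v : Est N d, PhiOp W (v - bx) + Fa α G W v
      = ((2 : ℝ) • v + α • RT (extPseudoGrad G v)) - c := by
    intro v
    rw [hc]
    simp only [PhiOp, Fa, hWact_sub]
    rw [two_smul]
    abel
  have hRT_apply_ne : ∀ (v : Prof N d) (i j : Fin N), j ≠ i → RT v i j = 0 := by
    intro v i j hj
    show Function.update (0 : Prof N d) i (v i) j = 0
    rw [Function.update_of_ne hj]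
    rfl
  have hRT_apply_eq : ∀ (v : Prof N d) (i : Fin N), RT v i i = v i := by
    intro v i
    show Function.update (0 : Prof N d) i (v i) i = v i
    simp
  set w : Est N d := c - ((2 : ℝ) • bx' + α • RT (extPseudoGrad G bx')) with hw
  have hweq : PhiOp W (bx' - bx) + Fa α G W bx' + w = 0 := by
    rw [keyalg, hw]
    abel
  have hw_apply : ∀ i j, w i j
      = c i j - ((2 : ℝ) • bx' i j + α • RT (extPseudoGrad G bx') i j) := fun i j => rfl
  have hbx'_apply_ne : ∀ i j, j ≠ i → bx' i j = (2 : ℝ)⁻¹ • c i j := by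
    intro i j hj
    show Function.update (u i) i (Y i) j = _
    rw [Function.update_of_ne hj]
  have hbx'_apply_eq : ∀ i, bx' i i = Y i := by
    intro i
    show Function.update (u i) i (Y i) i = Y i
    simp
  have hw_off : ∀ i j, j ≠ i → w i j = 0 := by
    intro i j hj
    rw [hw_apply, hbx'_apply_ne i j hj, hRT_apply_ne _ i j hj, smul_zero, add_zero,
      smul_smul, show (2 : ℝ) * 2⁻¹ = 1 by norm_num, one_smul, sub_self]
  have hw_diag : ∀ i, w i i = c i i - S i (Y i) := by
    intro i
    rw [hw_apply, hRT_apply_eq, hbx'_apply_eq]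
    have hG : extPseudoGrad G bx' i = g i (Y i) := rfl
    rw [hG]
  have hbx'mem : bx' ∈ bigOmega Ω := by
    intro i
    rw [hbx'_apply_eq]
    exact (hY i).1
  have hwmem : w ∈ normalCone (bigOmega Ω) bx' := by
    refine ⟨hbx'mem, ?_⟩
    intro z hz
    have hsum : ⟪w, z - bx'⟫_ℝ = ∑ i, ⟪w i i, z i i - Y i⟫_ℝ := by
      rw [PiLp.inner_apply]
      refine Finset.sum_congr rfl fun i _ => ?_
      rw [PiLp.inner_apply]
      rw [Finset.sum_eq_single_of_mem i (Finset.mem_univ i)]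
      · have e : (z - bx') i i = z i i - Y i := by
          show z i i - bx' i i = _
          rw [hbx'_apply_eq]
        rw [e]
      · intro j _ hj
        rw [hw_off i j hj, inner_zero_left]
    rw [hsum]
    apply Finset.sum_nonpos
    intro i _
    rw [hw_diag]
    exact (hY i).2 (z i i) (hz i)
  refine ⟨bx', ⟨w, hwmem, hweq⟩, ?_⟩
  rintro by' ⟨w', ⟨hby'Ω, hvar⟩, heq⟩
  rw [keyalg] at heq
  have hw' : w' = c - ((2 : ℝ) • by' + α • RT (extPseudoGrad G by')) := by
    have h := eq_neg_of_add_eq_zero_right heq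
    rw [h]
    abel
  have hw'_apply : ∀ i j, w' i j
      = c i j - ((2 : ℝ) • by' i j + α • RT (extPseudoGrad G by') i j) := by
    intro i j
    rw [hw']
    rfl
  have hw'_off : ∀ i j, j ≠ i → w' i j = 0 := by
    intro i j hj
    set zpt : Est N d :=
      WithLp.toLp 2 (Function.update by' i (WithLp.toLp 2 (Function.update (by' i) j (by' i j + w' i j)))) with hzpt
    have hzmem : zpt ∈ bigOmega Ω := by
      intro i'
      by_cases hi' : i' = i
      · subst hi'
        simp only [hzpt, WithLp.ofLp_toLp, Function.update_self, Function.update_of_ne (Ne.symm hj)]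
        exact hby'Ω i'
      · simp only [hzpt, WithLp.ofLp_toLp, Function.update_of_ne hi']
        exact hby'Ω i'
    have hval := hvar zpt hzmem
    have hcomp : ⟪w', zpt - by'⟫_ℝ = ‖w' i j‖ ^ 2 := by
      rw [PiLp.inner_apply]
      rw [Finset.sum_eq_single_of_mem i (Finset.mem_univ i)]
      · rw [PiLp.inner_apply]
        rw [Finset.sum_eq_single_of_mem j (Finset.mem_univ j)]
        · have e : (zpt - by') i j = w' i j := by
            show zpt i j - by' i j = w' i j
            rw [hzpt]
            simp
          rw [e, real_inner_self_eq_norm_sq]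
        · intro j' _ hj'
          have e : (zpt - by') i j' = 0 := by
            show zpt i j' - by' i j' = 0
            rw [hzpt]
            simp [Function.update_of_ne hj']
          rw [e, inner_zero_right]
      · intro i' _ hi'
        rw [PiLp.inner_apply]
        apply Finset.sum_eq_zero
        intro j' _
        have e : (zpt - by') i' j' = 0 := by
          show zpt i' j' - by' i' j' = 0
          rw [hzpt]
          simp [Function.update_of_ne hi']
        rw [e, inner_zero_right]
    rw [hcomp] at hval
    have h0 : ‖w' i j‖ ^ 2 = 0 := le_antisymm hval (sq_nonneg _)
    exact norm_eq_zero.mp (pow_eq_zero_iff two_ne_zero |>.mp h0)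
  have hrepr : ∀ i, by' i = WithLp.toLp 2 (Function.update (u i) i (by' i i)) := by
    intro i
    apply PiLp.ext
    intro j
    by_cases hj : j = i
    · subst hj
      simp only [WithLp.ofLp_toLp]
      rw [Function.update_self]
    · simp only [WithLp.ofLp_toLp]
      rw [Function.update_of_ne hj]
      have h0 := hw'_off i j hj
      have h1 : w' i j = c i j - (2 : ℝ) • by' i j := by
        rw [hw'_apply i j, hRT_apply_ne _ i j hj, smul_zero, add_zero]
      rw [h0] at h1
      have h2 : (2 : ℝ) • by' i j = c i j := (sub_eq_zero.mp h1.symm).symm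
      show by' i j = (2 : ℝ)⁻¹ • c i j
      rw [← h2, smul_smul, show (2 : ℝ)⁻¹ * 2 = 1 by norm_num, one_smul]
  have hdiag : ∀ i, by' i i = Y i := by
    intro i
    apply hYuniq
    constructor
    · exact hby'Ω i
    · intro z' hz'
      set zpt : Est N d := WithLp.toLp 2 (Function.update by' i (WithLp.toLp 2 (Function.update (by' i) i z'))) with hzpt
      have hzmem : zpt ∈ bigOmega Ω := by
        intro i'
        by_cases hi' : i' = i
        · subst hi'
          simp only [hzpt, WithLp.ofLp_toLp, Function.update_self]
          exact hz'
        · simp only [hzpt, WithLp.ofLp_toLp, Function.update_of_ne hi']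
          exact hby'Ω i'
      have hval := hvar zpt hzmem
      have hcomp : ⟪w', zpt - by'⟫_ℝ = ⟪w' i i, z' - by' i i⟫_ℝ := by
        rw [PiLp.inner_apply]
        rw [Finset.sum_eq_single_of_mem i (Finset.mem_univ i)]
        · rw [PiLp.inner_apply]
          rw [Finset.sum_eq_single_of_mem i (Finset.mem_univ i)]
          · have e : (zpt - by') i i = z' - by' i i := by
              show zpt i i - by' i i = _
              rw [hzpt]
              simp
            rw [e]
          · intro j' _ hj'
            have e : (zpt - by') i j' = 0 := by
              show zpt i j' - by' i j' = 0
              rw [hzpt]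
              simp [Function.update_of_ne hj']
            rw [e, inner_zero_right]
        · intro i' _ hi'
          rw [PiLp.inner_apply]
          apply Finset.sum_eq_zero
          intro j' _
          have e : (zpt - by') i' j' = 0 := by
            show zpt i' j' - by' i' j' = 0
            rw [hzpt]
            simp [Function.update_of_ne hi']
          rw [e, inner_zero_right]
      have hG : extPseudoGrad G by' i = g i (by' i i) := congrArg (G i) (hrepr i)
      have hw'ii : w' i i = c i i - S i (by' i i) := by
        rw [hw'_apply i i, hRT_apply_eq, hG]
      rw [hcomp, hw'ii] at hval
      exact hval
  apply PiLp.ext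
  intro i
  rw [hrepr i, hdiag i]
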